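/- arXiv:2603.17771 — 5 statements merged into one kernel-verified Lean document; each statement's English description precedes it below -/
import Mathlib

section
/- Fix d ≥ 1, γ ∈ ℝ^d, and ε > 0, and define RMSNorm : ℝ^d → ℝ^d by RMSNorm(x)_i = γ_i x_i / rms(x) with rms(x) = sqrt(‖x‖₂²/d + ε). Then for every x ∈ ℝ^d, the operator norm of the Fréchet derivative of RMSNorm at x satisfies ‖D RMSNorm(x)‖_op ≤ ‖γ‖_∞ / rms(x), where ‖γ‖_∞ = max_i |γ_i|. -/
set_option maxHeartbeats 2000000


/-- **Activation-dependent compression under RMSNorm (operator-norm bound).**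
With `rms x = √(‖x‖²/d + ε)` and `RMSNorm(x)_i = γ_i x_i / rms x`, the map `RMSNorm` is
differentiable and the operator norm of its Fréchet derivative at `x` is bounded by
`‖γ‖_∞ / rms x`, where `‖γ‖_∞ = max_i |γ_i|`. -/
theorem rmsnorm_fderiv_opNorm_le
    {d : ℕ} (hd : 1 ≤ d) (γ : Fin d → ℝ) (ε : ℝ) (hε : 0 < ε)
    (rms : EuclideanSpace ℝ (Fin d) → ℝ)
    (hrms : ∀ x, rms x = Real.sqrt (‖x‖ ^ 2 / d + ε))
    (RMSNorm : EuclideanSpace ℝ (Fin d) → EuclideanSpace ℝ (Fin d))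
    (hRMS : ∀ x, ∀ i, RMSNorm x i = γ i * x i / rms x) :
    ∀ x : EuclideanSpace ℝ (Fin d),
      DifferentiableAt ℝ RMSNorm x ∧
      ‖fderiv ℝ RMSNorm x‖ ≤ (⨆ i, |γ i|) / rms x := by
  intro x
  have hd0 : (0:ℝ) < d := by exact_mod_cast hd
  have hq0 : 0 < ‖x‖ ^ 2 / d + ε := by positivity
  set r : ℝ := rms x with hrdef
  have hr : r = Real.sqrt (‖x‖ ^ 2 / d + ε) := hrms x
  have hr0 : 0 < r := hr ▸ Real.sqrt_pos.2 hq0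
  have hr2 : r ^ 2 = ‖x‖ ^ 2 / d + ε := by rw [hr]; exact Real.sq_sqrt hq0.le
  -- diagonal continuous linear map
  let g : EuclideanSpace ℝ (Fin d) →L[ℝ] EuclideanSpace ℝ (Fin d) :=
    LinearMap.toContinuousLinearMap
      { toFun := fun v => WithLp.toLp 2 (fun i => γ i * v i)
        map_add' := by
          intro a b; ext i; simp [PiLp.add_apply, mul_add]
        map_smul' := by
          intro c a; ext i; simp [PiLp.smul_apply, smul_eq_mul]; ring }
  have hg : ∀ (v : EuclideanSpace ℝ (Fin d)) i, g v i = γ i * v i := fun v i => rfl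
  -- derivative of the scalar factor
  have hnorm2 : HasFDerivAt (fun y : EuclideanSpace ℝ (Fin d) => ‖y‖ ^ 2)
      (2 • (innerSL ℝ x)) x := (hasStrictFDerivAt_norm_sq x).hasFDerivAt
  have hq : HasFDerivAt (fun y : EuclideanSpace ℝ (Fin d) => ‖y‖ ^ 2 / d + ε)
      (((d:ℝ)⁻¹) • (2 • (innerSL ℝ x))) x := by
    simpa [div_eq_inv_mul] using (hnorm2.const_mul ((d:ℝ)⁻¹)).add_const ε
  have hsqrt : HasFDerivAt (fun y : EuclideanSpace ℝ (Fin d) => Real.sqrt (‖y‖ ^ 2 / d + ε))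
      ((1 / (2 * Real.sqrt (‖x‖ ^ 2 / d + ε))) • (((d:ℝ)⁻¹) • (2 • (innerSL ℝ x)))) x :=
    hq.sqrt hq0.ne'
  have hrmseq : rms = fun y : EuclideanSpace ℝ (Fin d) => Real.sqrt (‖y‖ ^ 2 / d + ε) :=
    funext hrms
  have hrmsf : HasFDerivAt rms ((1 / (2 * r)) • (((d:ℝ)⁻¹) • (2 • (innerSL ℝ x)))) x := by
    rw [hrmseq, hr]; exact hsqrt
  set c' : EuclideanSpace ℝ (Fin d) →L[ℝ] ℝ :=
    (-(r ^ 2)⁻¹) • ((1 / (2 * r)) • (((d:ℝ)⁻¹) • (2 • (innerSL ℝ x)))) with hc'def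
  have hinv : HasFDerivAt (fun y => (rms y)⁻¹) c' x := by
    exact (hasDerivAt_inv hr0.ne').comp_hasFDerivAt x hrmsf
  -- the full derivative
  set L : EuclideanSpace ℝ (Fin d) →L[ℝ] EuclideanSpace ℝ (Fin d) :=
    (rms x)⁻¹ • g + c'.smulRight (g x) with hLdef
  have hRMSeq : RMSNorm = fun y => (rms y)⁻¹ • g y := by
    funext y; ext i
    rw [hRMS y i]
    simp [PiLp.smul_apply, hg, smul_eq_mul, div_eq_inv_mul]
  have hF : HasFDerivAt RMSNorm L x := by
    rw [hRMSeq]; exact hinv.smul g.hasFDerivAt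
  refine ⟨hF.differentiableAt, ?_⟩
  rw [hF.fderiv]
  -- scalar for the rank-one part
  set k : ℝ := -((d:ℝ) * r ^ 3)⁻¹ with hk
  have hc'v : ∀ v, c' v = k * (inner ℝ x v : ℝ) := by
    intro v
    simp [hc'def, hk, ContinuousLinearMap.smul_apply, smul_eq_mul]
    field_simp
  -- sup norm of γ
  haveI : Nonempty (Fin d) := Fin.pos_iff_nonempty.1 (by omega)
  have hbdd : BddAbove (Set.range fun i => |γ i|) := Set.Finite.bddAbove (Set.finite_range _)
  set G : ℝ := ⨆ i, |γ i| with hG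
  have hGi : ∀ i, |γ i| ≤ G := fun i => le_ciSup hbdd i
  have hG0 : 0 ≤ G := (abs_nonneg (γ (Classical.arbitrary _))).trans (hGi _)
  apply ContinuousLinearMap.opNorm_le_bound _ (by positivity)
  intro v
  set s : ℝ := (inner ℝ x v : ℝ) with hs
  set m : EuclideanSpace ℝ (Fin d) := r⁻¹ • v + (k * s) • x with hm
  have hLv : ∀ i, L v i = γ i * m i := by
    intro i
    have e0 : L v = (rms x)⁻¹ • (g v) + (c' v) • (g x) := by
      rw [hLdef]
      simp only [ContinuousLinearMap.add_apply, ContinuousLinearMap.smul_apply,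
        ContinuousLinearMap.smulRight_apply]
    have e1 : m i = r⁻¹ * v i + (k * s) * x i := by
      rw [hm, PiLp.add_apply, PiLp.smul_apply, PiLp.smul_apply, smul_eq_mul, smul_eq_mul]
    rw [e0, PiLp.add_apply, PiLp.smul_apply, PiLp.smul_apply, hg, hg, hc'v,
      smul_eq_mul, smul_eq_mul, e1, ← hrdef, ← hs]
    ring
  -- ‖L v‖ ≤ G * ‖m‖
  have h1 : ‖L v‖ ≤ G * ‖m‖ := by
    rw [EuclideanSpace.norm_eq, EuclideanSpace.norm_eq]
    rw [show G = Real.sqrt (G ^ 2) from (Real.sqrt_sq hG0).symm]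
    rw [← Real.sqrt_mul (by positivity)]
    apply Real.sqrt_le_sqrt
    rw [Finset.mul_sum]
    apply Finset.sum_le_sum
    intro i _
    rw [hLv i]
    have := hGi i
    have h2 : (γ i)^2 ≤ G^2 := by nlinarith [abs_nonneg (γ i), sq_abs (γ i)]
    simp only [Real.norm_eq_abs, sq_abs]
    nlinarith [sq_nonneg (m i)]
  -- ‖m‖ ≤ r⁻¹ * ‖v‖
  have hsx : (inner ℝ v x : ℝ) = s := (real_inner_comm v x).symm
  have hnormm : ‖m‖ ^ 2 = r⁻¹ ^ 2 * ‖v‖ ^ 2 + 2 * (r⁻¹ * (k * s) * s) + (k * s) ^ 2 * ‖x‖ ^ 2 := by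
    rw [hm, @norm_add_sq_real]
    rw [norm_smul, norm_smul, real_inner_smul_left, real_inner_smul_right, hsx]
    simp [Real.norm_eq_abs, abs_of_pos (inv_pos.2 hr0), mul_pow, sq_abs]
    ring
  have hmle : ‖m‖ ≤ r⁻¹ * ‖v‖ := by
    have hxn : ‖x‖ ^ 2 ≤ d * r ^ 2 := by
      rw [hr2]; rw [mul_add, mul_div_cancel₀ _ hd0.ne']; nlinarith
    have hrest : 2 * (r⁻¹ * (k * s) * s) + (k * s) ^ 2 * ‖x‖ ^ 2 ≤ 0 := by
      have hkk : k = -((d:ℝ) * r ^ 3)⁻¹ := hk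
      have hdr3 : (0:ℝ) < (d:ℝ) * r ^ 3 := by positivity
      rw [hkk]
      have e1 : 2 * (r⁻¹ * (-((d:ℝ) * r ^ 3)⁻¹ * s) * s) = -(2 * s^2 * (r⁻¹ * ((d:ℝ) * r ^ 3)⁻¹)) := by ring
      have e2 : (-((d:ℝ) * r ^ 3)⁻¹ * s) ^ 2 * ‖x‖ ^ 2 = s^2 * (((d:ℝ) * r ^ 3)⁻¹)^2 * ‖x‖^2 := by ring
      rw [e1, e2]
      have h3 : s^2 * (((d:ℝ) * r ^ 3)⁻¹)^2 * ‖x‖^2 ≤ s^2 * (((d:ℝ) * r ^ 3)⁻¹)^2 * ((d:ℝ) * r ^ 2) := by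
        apply mul_le_mul_of_nonneg_left hxn (by positivity)
      have h4 : s^2 * (((d:ℝ) * r ^ 3)⁻¹)^2 * ((d:ℝ) * r ^ 2) = s^2 * (r⁻¹ * ((d:ℝ) * r ^ 3)⁻¹) := by
        field_simp
      nlinarith [sq_nonneg s, mul_pos (inv_pos.2 hr0) (inv_pos.2 hdr3), sq_nonneg (s * ((d:ℝ)*r^3)⁻¹)]
    have : ‖m‖ ^ 2 ≤ (r⁻¹ * ‖v‖) ^ 2 := by rw [hnormm]; nlinarith
    have h5 : (0:ℝ) ≤ r⁻¹ * ‖v‖ := by positivity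
    nlinarith [norm_nonneg m]
  calc ‖L v‖ ≤ G * ‖m‖ := h1
    _ ≤ G * (r⁻¹ * ‖v‖) := by apply mul_le_mul_of_nonneg_left hmle hG0
    _ = G / rms x * ‖v‖ := by rw [← hrdef]; ring
end

section
/- Fix d ≥ 1, γ ∈ ℝ^d, and ε > 0, and define RMSNorm : ℝ^d → ℝ^d by RMSNorm(x)_i = γ_i x_i / rms(x) with rms(x) = sqrt(‖x‖₂²/d + ε). Let L : ℝ^d → ℝ be differentiable. Then for every x ∈ ℝ^d, the gradient of the composition L ∘ RMSNorm at x satisfies ‖∇(L ∘ RMSNorm)(x)‖₂ ≤ (‖γ‖_∞ / rms(x)) · ‖∇L(RMSNorm(x))‖₂. -/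
open Real ContinuousLinearMap

/-- **Gradient attenuation of a loss through RMSNorm.**
With `rms x = √(‖x‖²/d + ε)` and `RMSNorm(x)_i = γ_i x_i / rms x`, for any differentiable
loss `L : ℝ^d → ℝ` the gradient of `L ∘ RMSNorm` satisfies
`‖∇(L ∘ RMSNorm)(x)‖ ≤ (‖γ‖_∞ / rms x) · ‖∇L(RMSNorm x)‖`. -/
theorem rmsnorm_gradient_comp_norm_le
    {d : ℕ} (hd : 1 ≤ d) (γ : Fin d → ℝ) (ε : ℝ) (hε : 0 < ε)
    (rms : EuclideanSpace ℝ (Fin d) → ℝ)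
    (hrms : ∀ x, rms x = Real.sqrt (‖x‖ ^ 2 / d + ε))
    (RMSNorm : EuclideanSpace ℝ (Fin d) → EuclideanSpace ℝ (Fin d))
    (hRMS : ∀ x, ∀ i, RMSNorm x i = γ i * x i / rms x)
    (L : EuclideanSpace ℝ (Fin d) → ℝ) (hL : Differentiable ℝ L) :
    ∀ x : EuclideanSpace ℝ (Fin d),
      ‖gradient (L ∘ RMSNorm) x‖ ≤ (⨆ i, |γ i|) / rms x * ‖gradient L (RMSNorm x)‖ := by
  intro x
  classical
  have hdpos : (0:ℝ) < d := by exact_mod_cast hd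
  have harg : (0:ℝ) < ‖x‖ ^ 2 / d + ε := by positivity
  set r : ℝ := rms x with hrdef
  have hrx : r = Real.sqrt (‖x‖ ^ 2 / d + ε) := hrms x
  have hrpos : 0 < r := by rw [hrx]; exact Real.sqrt_pos.mpr harg
  have hr2 : r ^ 2 = ‖x‖ ^ 2 / d + ε := by
    rw [hrx, Real.sq_sqrt harg.le]
  have hxle : ‖x‖ ^ 2 ≤ d * r ^ 2 := by
    rw [hr2, mul_add, mul_div_cancel₀ _ hdpos.ne']; nlinarith
  haveI : Nonempty (Fin d) := ⟨⟨0, hd⟩⟩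
  set S : ℝ := ⨆ i, |γ i| with hS
  have hγle : ∀ i, |γ i| ≤ S := fun i =>
    le_ciSup (f := fun i => |γ i|) (Set.Finite.bddAbove (Set.finite_range _)) i
  have hS0 : 0 ≤ S := le_trans (abs_nonneg _) (hγle ⟨0, hd⟩)
  -- the diagonal map
  let ℓ : EuclideanSpace ℝ (Fin d) →ₗ[ℝ] EuclideanSpace ℝ (Fin d) :=
    { toFun := fun v => (WithLp.toLp 2 (fun i => γ i * v i) : EuclideanSpace ℝ (Fin d))
      map_add' := by
        intro a b; ext i
        show γ i * (a i + b i) = γ i * a i + γ i * b i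
        ring
      map_smul' := by
        intro c a; ext i
        show γ i * (c * a i) = c * (γ i * a i)
        ring }
  let Dγ : EuclideanSpace ℝ (Fin d) →L[ℝ] EuclideanSpace ℝ (Fin d) :=
    LinearMap.toContinuousLinearMap ℓ
  have hDγ_apply : ∀ v : EuclideanSpace ℝ (Fin d), ∀ i, Dγ v i = γ i * v i := fun v i => rfl
  have hDγ_norm : ∀ v : EuclideanSpace ℝ (Fin d), ‖Dγ v‖ ≤ S * ‖v‖ := by
    intro v
    rw [EuclideanSpace.norm_eq, EuclideanSpace.norm_eq]
    rw [← Real.sqrt_sq hS0, ← Real.sqrt_mul (sq_nonneg S)]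
    apply Real.sqrt_le_sqrt
    rw [Finset.mul_sum]
    apply Finset.sum_le_sum
    intro i _
    rw [hDγ_apply, Real.norm_eq_abs, Real.norm_eq_abs, abs_mul, mul_pow]
    apply mul_le_mul_of_nonneg_right _ (sq_nonneg _)
    exact pow_le_pow_left₀ (abs_nonneg _) (hγle i) 2
  -- derivative of (rms ·)⁻¹
  have hnorm : HasFDerivAt (fun y : EuclideanSpace ℝ (Fin d) => ‖y‖ ^ 2 / d + ε)
      ((d:ℝ)⁻¹ • (2 • (innerSL ℝ x))) x := by
    have h1 : HasFDerivAt (fun y : EuclideanSpace ℝ (Fin d) => ‖y‖ ^ 2)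
        (2 • (innerSL ℝ x)) x := by
      simpa using (hasFDerivAt_id x).norm_sq
    simpa [div_eq_inv_mul, smul_smul] using ((h1.const_smul ((d:ℝ)⁻¹)).add_const ε)
  have hs : HasFDerivAt (fun y : EuclideanSpace ℝ (Fin d) => (rms y)⁻¹)
      ((-(1 / (2 * r)) / r ^ 2) • ((d:ℝ)⁻¹ • (2 • (innerSL ℝ x)))) x := by
    have hinv : HasDerivAt (fun t : ℝ => (Real.sqrt t)⁻¹)
        (-(1 / (2 * Real.sqrt (‖x‖ ^ 2 / d + ε))) / (Real.sqrt (‖x‖ ^ 2 / d + ε)) ^ 2)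
        (‖x‖ ^ 2 / d + ε) :=
      (Real.hasDerivAt_sqrt harg.ne').inv (by positivity)
    have h2 := hinv.comp_hasFDerivAt x hnorm
    have heq : (fun y : EuclideanSpace ℝ (Fin d) => (rms y)⁻¹)
        = (fun t : ℝ => (Real.sqrt t)⁻¹) ∘ (fun y : EuclideanSpace ℝ (Fin d) => ‖y‖ ^ 2 / d + ε) := by
      funext y; simp [Function.comp, hrms y]
    rw [heq, ← hrx] at *
    exact h2
  have hfeq : RMSNorm = fun y => (rms y)⁻¹ • Dγ y := by
    funext y
    ext i
    rw [PiLp.smul_apply, hDγ_apply, hRMS y i, smul_eq_mul, div_eq_inv_mul]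
  set D : EuclideanSpace ℝ (Fin d) →L[ℝ] EuclideanSpace ℝ (Fin d) :=
    (rms x)⁻¹ • Dγ + ((-(1 / (2 * r)) / r ^ 2) • ((d:ℝ)⁻¹ • (2 • (innerSL ℝ x)))).smulRight (Dγ x)
    with hD
  have hf : HasFDerivAt RMSNorm D x := by
    rw [hfeq]
    exact hs.smul Dγ.hasFDerivAt
  have hDv : ∀ v : EuclideanSpace ℝ (Fin d),
      D v = r⁻¹ • Dγ (v - (inner ℝ x v / (d * r ^ 2) : ℝ) • x) := by
    intro v
    rw [map_sub, map_smul, smul_sub]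
    rw [hD]
    simp only [ContinuousLinearMap.add_apply, ContinuousLinearMap.smul_apply,
      ContinuousLinearMap.smulRight_apply, innerSL_apply_apply, smul_smul, ← hrdef]
    rw [sub_eq_add_neg, ← neg_smul]
    congr 1
    congr 1
    field_simp
    have hr3 : r ^ 3 * r⁻¹ ^ 3 = 1 := by rw [← mul_pow, mul_inv_cancel₀ hrpos.ne', one_pow]
    have hd1 : (d:ℝ) * (d:ℝ)⁻¹ = 1 := mul_inv_cancel₀ hdpos.ne'
    linear_combination (-(inner ℝ x v : ℝ) * (d:ℝ) * (d:ℝ)⁻¹) * hr3 + (-(inner ℝ x v : ℝ)) * hd1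
  have hwle : ∀ v : EuclideanSpace ℝ (Fin d),
      ‖v - (inner ℝ x v / (d * r ^ 2) : ℝ) • x‖ ≤ ‖v‖ := by
    intro v
    set t : ℝ := inner ℝ x v / (d * r ^ 2) with ht
    have hdr : (0:ℝ) < d * r ^ 2 := by positivity
    have h1 : ‖v - t • x‖ ^ 2 ≤ ‖v‖ ^ 2 := by
      rw [norm_sub_sq_real]
      have hip : (inner ℝ v (t • x) : ℝ) = t * inner ℝ x v := by
        rw [real_inner_smul_right, real_inner_comm]
      rw [hip, norm_smul, mul_pow, Real.norm_eq_abs, sq_abs]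
      have ht2 : t * (d * r ^ 2) = inner ℝ x v := by
        rw [ht]; field_simp
      have h2p : t * (inner ℝ x v : ℝ) = t ^ 2 * (d * r ^ 2) := by
        rw [← ht2]; ring
      have h3 : t ^ 2 * ‖x‖ ^ 2 ≤ t ^ 2 * (d * r ^ 2) :=
        mul_le_mul_of_nonneg_left hxle (sq_nonneg t)
      have h4 : 0 ≤ t ^ 2 * (d * r ^ 2) := mul_nonneg (sq_nonneg t) hdr.le
      linarith
    have h5 := Real.sqrt_le_sqrt h1
    rwa [Real.sqrt_sq (norm_nonneg _), Real.sqrt_sq (norm_nonneg _)] at h5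
  have hDnorm : ‖D‖ ≤ S / r := by
    apply ContinuousLinearMap.opNorm_le_bound _ (by positivity)
    intro v
    rw [hDv v, norm_smul, norm_inv, Real.norm_eq_abs, abs_of_pos hrpos]
    calc r⁻¹ * ‖Dγ (v - (inner ℝ x v / (d * r ^ 2) : ℝ) • x)‖
        ≤ r⁻¹ * (S * ‖v - (inner ℝ x v / (d * r ^ 2) : ℝ) • x‖) := by
          apply mul_le_mul_of_nonneg_left (hDγ_norm _) (by positivity)
      _ ≤ r⁻¹ * (S * ‖v‖) := by
          apply mul_le_mul_of_nonneg_left _ (by positivity)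
          exact mul_le_mul_of_nonneg_left (hwle v) hS0
      _ = S / r * ‖v‖ := by ring
  have hLf : HasFDerivAt (L ∘ RMSNorm) ((fderiv ℝ L (RMSNorm x)).comp D) x :=
    ((hL (RMSNorm x)).hasFDerivAt).comp x hf
  have hgrad1 : ‖gradient (L ∘ RMSNorm) x‖ = ‖fderiv ℝ (L ∘ RMSNorm) x‖ := by
    rw [gradient]; exact LinearIsometryEquiv.norm_map _ _
  have hgrad2 : ‖gradient L (RMSNorm x)‖ = ‖fderiv ℝ L (RMSNorm x)‖ := by
    rw [gradient]; exact LinearIsometryEquiv.norm_map _ _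
  rw [hgrad1, hgrad2, hLf.fderiv]
  calc ‖(fderiv ℝ L (RMSNorm x)).comp D‖
      ≤ ‖fderiv ℝ L (RMSNorm x)‖ * ‖D‖ := ContinuousLinearMap.opNorm_comp_le _ _
    _ ≤ ‖fderiv ℝ L (RMSNorm x)‖ * (S / r) :=
        mul_le_mul_of_nonneg_left hDnorm (norm_nonneg _)
    _ = S / r * ‖fderiv ℝ L (RMSNorm x)‖ := by ring
end

section
/- Fix d ≥ 1, γ ∈ ℝ^d, and ε > 0, and define RMSNorm : ℝ^d → ℝ^d by RMSNorm(x)_i = γ_i x_i / rms(x) with rms(x) = sqrt(‖x‖₂²/d + ε). Then rms(x) ≥ ‖x‖₂ / √d for every x, and consequently for every x ≠ 0 the operator norm of the Fréchet derivative of RMSNorm at x satisfies ‖D RMSNorm(x)‖_op ≤ √d · ‖γ‖_∞ / ‖x‖₂. -/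
open RealInnerProductSpace in
lemma aux_contraction {E : Type*} [NormedAddCommGroup E] [InnerProductSpace ℝ E]
    (x v : E) (t : ℝ) (ht : 0 ≤ t) (htx : t * ‖x‖ ^ 2 ≤ 1) :
    ‖v - (t * ⟪x, v⟫) • x‖ ≤ ‖v‖ := by
  set p : ℝ := ⟪x, v⟫ with hp
  have hsq : ‖v - (t * p) • x‖ ^ 2 ≤ ‖v‖ ^ 2 := by
    have h := norm_sub_sq_real v ((t * p) • x)
    have h1 : ⟪v, (t * p) • x⟫ = (t * p) * p := by
      rw [real_inner_smul_right, real_inner_comm]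
    have h2 : ‖(t * p) • x‖ ^ 2 = (t * p) ^ 2 * ‖x‖ ^ 2 := by
      rw [norm_smul, mul_pow, Real.norm_eq_abs, sq_abs]
    rw [h, h1, h2]
    nlinarith [mul_nonneg ht (sq_nonneg p), sq_nonneg p, sq_nonneg ‖x‖,
      mul_nonneg (mul_nonneg ht ht) (sq_nonneg p)]
  calc ‖v - (t * p) • x‖ = Real.sqrt (‖v - (t * p) • x‖ ^ 2) := by
        rw [Real.sqrt_sq (norm_nonneg _)]
    _ ≤ Real.sqrt (‖v‖ ^ 2) := Real.sqrt_le_sqrt hsq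
    _ = ‖v‖ := Real.sqrt_sq (norm_nonneg _)

/-- **RMSNorm gradient compression scales inversely with activation norm.**
With `rms x = √(‖x‖²/d + ε)` and `RMSNorm(x)_i = γ_i x_i / rms x`, one has
`rms x ≥ ‖x‖ / √d` for every `x`, and consequently for every `x ≠ 0` the operator norm
of the Fréchet derivative of `RMSNorm` at `x` is at most `√d · ‖γ‖_∞ / ‖x‖`. -/
theorem rmsnorm_fderiv_opNorm_le_inv_norm
    {d : ℕ} (hd : 1 ≤ d) (γ : Fin d → ℝ) (ε : ℝ) (hε : 0 < ε)
    (rms : EuclideanSpace ℝ (Fin d) → ℝ)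
    (hrms : ∀ x, rms x = Real.sqrt (‖x‖ ^ 2 / d + ε))
    (RMSNorm : EuclideanSpace ℝ (Fin d) → EuclideanSpace ℝ (Fin d))
    (hRMS : ∀ x, ∀ i, RMSNorm x i = γ i * x i / rms x) :
    (∀ x : EuclideanSpace ℝ (Fin d), ‖x‖ / Real.sqrt d ≤ rms x) ∧
    ∀ x : EuclideanSpace ℝ (Fin d), x ≠ 0 →
      ‖fderiv ℝ RMSNorm x‖ ≤ Real.sqrt d * (⨆ i, |γ i|) / ‖x‖ := by
  have hd0 : (0 : ℝ) < (d : ℝ) := by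
    exact_mod_cast Nat.lt_of_lt_of_le Nat.zero_lt_one hd
  -- Part 1
  have part1 : ∀ x : EuclideanSpace ℝ (Fin d), ‖x‖ / Real.sqrt d ≤ rms x := by
    intro x
    rw [hrms]
    have h1 : Real.sqrt (‖x‖ ^ 2 / d) = ‖x‖ / Real.sqrt d := by
      rw [Real.sqrt_div (sq_nonneg _), Real.sqrt_sq (norm_nonneg _)]
    rw [← h1]
    exact Real.sqrt_le_sqrt (by linarith)
  refine ⟨part1, ?_⟩
  intro x hx
  have hxpos : (0 : ℝ) < ‖x‖ := norm_pos_iff.2 hx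
  set G : ℝ := ⨆ i, |γ i| with hGdef
  have hbdd : BddAbove (Set.range fun i => |γ i|) := Set.Finite.bddAbove (Set.finite_range _)
  have hle : ∀ i, |γ i| ≤ G := fun i => le_ciSup hbdd i
  have hG0 : (0 : ℝ) ≤ G := le_trans (abs_nonneg _) (hle ⟨0, hd⟩)
  set r : ℝ := rms x with hr
  have hnx : (0 : ℝ) < ‖x‖ ^ 2 / d + ε := by positivity
  have hr0 : 0 < r := by rw [hr, hrms]; exact Real.sqrt_pos.2 hnx
  have hr2 : r ^ 2 = ‖x‖ ^ 2 / d + ε := by rw [hr, hrms]; exact Real.sq_sqrt hnx.le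
  have hxr : ‖x‖ ^ 2 ≤ (d : ℝ) * r ^ 2 := by
    rw [hr2, mul_add, mul_div_cancel₀ _ hd0.ne']
    nlinarith
  -- The diagonal map
  let Glin : EuclideanSpace ℝ (Fin d) →ₗ[ℝ] EuclideanSpace ℝ (Fin d) :=
    { toFun := fun y => (WithLp.toLp 2 (fun i => γ i * y i) : EuclideanSpace ℝ (Fin d))
      map_add' := by intro a b; ext i; simp [mul_add]
      map_smul' := by intro c a; ext i; simp [smul_eq_mul]; ring }
  let Gmap : EuclideanSpace ℝ (Fin d) →L[ℝ] EuclideanSpace ℝ (Fin d) :=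
    LinearMap.toContinuousLinearMap Glin
  have hGapp : ∀ (y : EuclideanSpace ℝ (Fin d)) (i : Fin d), Gmap y i = γ i * y i :=
    fun y i => rfl
  have hGmap : ∀ y : EuclideanSpace ℝ (Fin d), ‖Gmap y‖ ≤ G * ‖y‖ := by
    intro y
    rw [EuclideanSpace.norm_eq, EuclideanSpace.norm_eq, ← Real.sqrt_sq hG0,
      ← Real.sqrt_mul (sq_nonneg G)]
    apply Real.sqrt_le_sqrt
    rw [Finset.mul_sum]
    apply Finset.sum_le_sum
    intro i _
    have h1 : ‖Gmap y i‖ = |γ i| * ‖y i‖ := by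
      rw [hGapp, Real.norm_eq_abs, Real.norm_eq_abs, abs_mul]
    rw [h1, mul_pow]
    exact mul_le_mul_of_nonneg_right
      (pow_le_pow_left₀ (abs_nonneg _) (hle i) 2) (sq_nonneg _)
  -- derivative of rms
  have hrms' : rms = fun y : EuclideanSpace ℝ (Fin d) =>
      Real.sqrt ((d : ℝ)⁻¹ * ‖y‖ ^ 2 + ε) := by
    funext y; rw [hrms, div_eq_inv_mul]
  have hn : HasFDerivAt (fun y : EuclideanSpace ℝ (Fin d) => (d : ℝ)⁻¹ * ‖y‖ ^ 2 + ε)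
      ((d : ℝ)⁻¹ • (2 • innerSL ℝ x)) x := by
    have h0 : HasFDerivAt (fun y : EuclideanSpace ℝ (Fin d) => ‖y‖ ^ 2)
        (2 • innerSL ℝ x) x := (hasStrictFDerivAt_norm_sq x).hasFDerivAt
    exact (h0.const_smul ((d : ℝ)⁻¹)).add_const ε
  have hnxval : (d : ℝ)⁻¹ * ‖x‖ ^ 2 + ε ≠ 0 := by
    rw [← div_eq_inv_mul, mul_comm] at *
    have : (0 : ℝ) < ‖x‖ ^ 2 / d + ε := hnx
    linarith [this]
  have hsqrtval : Real.sqrt ((d : ℝ)⁻¹ * ‖x‖ ^ 2 + ε) = r := by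
    rw [hr, hrms, div_eq_inv_mul]
  have hsq : HasFDerivAt rms
      ((1 / (2 * r)) • ((d : ℝ)⁻¹ • (2 • innerSL ℝ x))) x := by
    rw [hrms']
    have := hn.sqrt hnxval
    rwa [hsqrtval] at this
  have hinv : HasFDerivAt (fun y => (rms y)⁻¹)
      ((-(r ^ 2)⁻¹) • ((1 / (2 * r)) • ((d : ℝ)⁻¹ • (2 • innerSL ℝ x)))) x := by
    have := HasDerivAt.comp_hasFDerivAt_of_eq x (hasDerivAt_inv hr0.ne') hsq hr.symm
    exact this
  -- the full derivative
  have hfun : RMSNorm = fun y => (rms y)⁻¹ • Gmap y := by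
    funext y; ext i
    rw [hRMS]
    show γ i * y i / rms y = (rms y)⁻¹ • Gmap y i
    rw [hGapp, smul_eq_mul, div_eq_inv_mul]
  set c' : EuclideanSpace ℝ (Fin d) →L[ℝ] ℝ :=
    (-(r ^ 2)⁻¹) • ((1 / (2 * r)) • ((d : ℝ)⁻¹ • (2 • innerSL ℝ x))) with hc'
  set L : EuclideanSpace ℝ (Fin d) →L[ℝ] EuclideanSpace ℝ (Fin d) :=
    r⁻¹ • Gmap + c'.smulRight (Gmap x) with hL
  have hDL : HasFDerivAt RMSNorm L x := by
    rw [hfun]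
    exact hinv.smul Gmap.hasFDerivAt
  have hfd : fderiv ℝ RMSNorm x = L := hDL.fderiv
  -- bound on L
  have hLv : ∀ v, ‖L v‖ ≤ (G / r) * ‖v‖ := by
    intro v
    set p : ℝ := (inner ℝ x v : ℝ) with hp
    have hLv_eq : L v = r⁻¹ •
        Gmap (v - ((1 / ((d : ℝ) * r ^ 2)) * p) • x) := by
      ext i
      have hlhs : L v i = r⁻¹ * (γ i * v i) + (c' v) * (γ i * x i) := by
        rw [hL]
        show (r⁻¹ • Gmap v + (c' v) • Gmap x) i = _
        rw [PiLp.add_apply, PiLp.smul_apply, PiLp.smul_apply, hGapp, hGapp,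
          smul_eq_mul, smul_eq_mul]
      have hc'v : c' v = -(p / ((d : ℝ) * r ^ 3)) := by
        simp only [hc', ContinuousLinearMap.smul_apply, smul_eq_mul, innerSL_apply_apply, ← hp]
        field_simp
        ring
      rw [hlhs, hc'v]
      show _ = r⁻¹ * (γ i * (v - ((1 / ((d : ℝ) * r ^ 2)) * p) • x) i)
      rw [PiLp.sub_apply, PiLp.smul_apply, smul_eq_mul]
      field_simp
      ring
    have hcontr : ‖v - ((1 / ((d : ℝ) * r ^ 2)) * p) • x‖ ≤ ‖v‖ := by
      apply aux_contraction x v (1 / ((d : ℝ) * r ^ 2)) (by positivity)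
      rw [div_mul_eq_mul_div, one_mul, div_le_one (by positivity)]
      exact hxr
    rw [hLv_eq, norm_smul, Real.norm_eq_abs, abs_inv, abs_of_pos hr0]
    calc r⁻¹ * ‖Gmap (v - ((1 / ((d : ℝ) * r ^ 2)) * p) • x)‖
        ≤ r⁻¹ * (G * ‖v - ((1 / ((d : ℝ) * r ^ 2)) * p) • x‖) := by
          apply mul_le_mul_of_nonneg_left (hGmap _) (by positivity)
      _ ≤ r⁻¹ * (G * ‖v‖) := by
          apply mul_le_mul_of_nonneg_left
            (mul_le_mul_of_nonneg_left hcontr hG0) (by positivity)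
      _ = (G / r) * ‖v‖ := by ring
  rw [hfd]
  have hC : G / r ≤ Real.sqrt d * G / ‖x‖ := by
    have h1 : (0 : ℝ) < ‖x‖ / Real.sqrt d := by positivity
    have h2 : G / r ≤ G / (‖x‖ / Real.sqrt d) := by
      gcongr
      exact part1 x
    have h3 : G / (‖x‖ / Real.sqrt d) = Real.sqrt d * G / ‖x‖ := by
      rw [div_div_eq_mul_div, mul_comm]
    linarith [h2, h3.symm.le]
  exact (ContinuousLinearMap.opNorm_le_bound L (div_nonneg hG0 hr0.le) hLv).trans hC
end

section
/- Fix d ≥ 1 and C > 0, define φ(r) = r/(r + C), and define the V-scale map Φ : ℝ^d → ℝ^d by Φ(v) = φ(‖v‖₂²) v. Then for every v ∈ ℝ^d, the operator norm of the Fréchet derivative of Φ at v equals (r² + 3Cr)/(r + C)², where r = ‖v‖₂². -/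
open scoped RealInnerProductSpace

/-- **Operator norm of the V-scale Jacobian.**
With `φ(r) = r/(r + C)` and `Φ(v) = φ(‖v‖²) v`, the operator norm of the Fréchet
derivative of `Φ` at `v` equals `(r² + 3Cr)/(r + C)²`, where `r = ‖v‖²`. -/
theorem vscale_fderiv_opNorm_eq
    {d : ℕ} (hd : 1 ≤ d) (C : ℝ) (hC : 0 < C)
    (φ : ℝ → ℝ) (hφ : ∀ r, φ r = r / (r + C))
    (Φ : EuclideanSpace ℝ (Fin d) → EuclideanSpace ℝ (Fin d))
    (hΦ : ∀ v, Φ v = φ (‖v‖ ^ 2) • v) :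
    ∀ v : EuclideanSpace ℝ (Fin d),
      ‖fderiv ℝ Φ v‖ = ((‖v‖ ^ 2) ^ 2 + 3 * C * ‖v‖ ^ 2) / (‖v‖ ^ 2 + C) ^ 2 := by
  intro v
  set r : ℝ := ‖v‖ ^ 2 with hr
  have hr0 : 0 ≤ r := by positivity
  have hrC : 0 < r + C := by linarith
  set k : ℝ := 2 * C / (r + C) ^ 2 with hk
  have hk0 : 0 ≤ k := by positivity
  set lam : ℝ := (r ^ 2 + 3 * C * r) / (r + C) ^ 2 with hlam
  have hlam0 : 0 ≤ lam := by positivity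
  set L : EuclideanSpace ℝ (Fin d) →L[ℝ] EuclideanSpace ℝ (Fin d) :=
    φ r • ContinuousLinearMap.id ℝ _ + k • (innerSL ℝ v).smulRight v with hL
  -- value of L on a vector
  have hLapp : ∀ w : EuclideanSpace ℝ (Fin d), L w = φ r • w + (k * ⟪v, w⟫) • v := by
    intro w
    simp [hL, mul_smul]
  -- derivative of φ at r
  have hφd : HasDerivAt φ (C / (r + C) ^ 2) r := by
    have h1 : HasDerivAt (fun s : ℝ => s / (s + C))
        ((1 * (r + C) - r * 1) / (r + C) ^ 2) r :=
      (hasDerivAt_id r).div ((hasDerivAt_id r).add_const C) (ne_of_gt hrC)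
    have h2 : (1 * (r + C) - r * 1) / (r + C) ^ 2 = C / (r + C) ^ 2 := by ring
    rw [h2] at h1
    have : φ = fun s : ℝ => s / (s + C) := funext hφ
    rw [this]
    exact h1
  -- derivative of ‖·‖² at v
  have hns : HasFDerivAt (fun w : EuclideanSpace ℝ (Fin d) => ‖w‖ ^ 2) (2 • (innerSL ℝ v)) v :=
    (hasStrictFDerivAt_norm_sq v).hasFDerivAt
  -- derivative of w ↦ φ (‖w‖²) at v
  have hc : HasFDerivAt (fun w : EuclideanSpace ℝ (Fin d) => φ (‖w‖ ^ 2))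
      ((C / (r + C) ^ 2) • (2 • (innerSL ℝ v))) v :=
    hφd.comp_hasFDerivAt v hns
  have hderiv : HasFDerivAt Φ L v := by
    have h := hc.smul (hasFDerivAt_id v)
    have hfun : Φ = fun w : EuclideanSpace ℝ (Fin d) => φ (‖w‖ ^ 2) • w := funext hΦ
    rw [hfun]
    refine h.congr_fderiv ?_
    symm
    apply ContinuousLinearMap.ext
    intro w
    rw [hLapp]
    simp only [ContinuousLinearMap.add_apply, ContinuousLinearMap.smul_apply,
      ContinuousLinearMap.smulRight_apply, ContinuousLinearMap.id_apply,
      ContinuousLinearMap.coe_smul', Pi.smul_apply, id_eq, smul_eq_mul, two_smul,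
      innerSL_apply_apply, ← hr]
    congr 2
    rw [hk]
    ring
  rw [hderiv.fderiv]
  -- φ r is nonneg and φ r + k * r = lam
  have hφr : φ r = r / (r + C) := hφ r
  have hφr0 : 0 ≤ φ r := by rw [hφr]; positivity
  have hsum : φ r + k * r = lam := by
    rw [hφr, hk, hlam]
    field_simp
    ring
  refine le_antisymm ?_ ?_
  · refine ContinuousLinearMap.opNorm_le_bound _ hlam0 ?_
    intro w
    rw [hLapp]
    calc ‖φ r • w + (k * ⟪v, w⟫) • v‖
        ≤ ‖φ r • w‖ + ‖(k * ⟪v, w⟫) • v‖ := norm_add_le _ _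
      _ = φ r * ‖w‖ + |k * ⟪v, w⟫| * ‖v‖ := by
          rw [norm_smul, norm_smul, Real.norm_eq_abs, Real.norm_eq_abs,
            abs_of_nonneg hφr0]
      _ ≤ φ r * ‖w‖ + k * (‖v‖ * ‖w‖) * ‖v‖ := by
          gcongr
          rw [abs_mul, abs_of_nonneg hk0]
          gcongr
          exact abs_real_inner_le_norm v w
      _ = (φ r + k * r) * ‖w‖ := by rw [hr]; ring
      _ = lam * ‖w‖ := by rw [hsum]
  · rcases eq_or_ne v 0 with hv | hv
    · have : lam = 0 := by
        rw [hlam, hr, hv]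
        simp
      rw [this]
      exact norm_nonneg _
    · have hvn : 0 < ‖v‖ := norm_pos_iff.mpr hv
      have hLv : L v = lam • v := by
        rw [hLapp, real_inner_self_eq_norm_sq, ← hr, ← hsum]
        rw [add_smul, mul_smul]
      have h1 : ‖L v‖ = lam * ‖v‖ := by
        rw [hLv, norm_smul, Real.norm_eq_abs, abs_of_nonneg hlam0]
      have h2 := L.le_opNorm v
      rw [h1] at h2
      exact le_of_mul_le_mul_right h2 hvn
end

section
/- Fix d ≥ 1 and C > 0, define φ(r) = r/(r + C), and define the V-scale map Φ : ℝ^d → ℝ^d by Φ(v) = φ(‖v‖₂²) v. Then for every v ∈ ℝ^d, the operator norm of the Fréchet derivative of Φ at v is at most 3‖v‖₂²/C. In particular, the value-path backpropagated signal through Φ is strongly attenuated for tokens with ‖v‖₂² ≪ C. -/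
open scoped RealInnerProductSpace

/-- **Strong attenuation of the value path for small-norm values.**
With `φ(r) = r/(r + C)` and `Φ(v) = φ(‖v‖²) v`, the operator norm of the Fréchet
derivative of `Φ` at `v` is at most `3‖v‖²/C`; hence the backpropagated signal through
`Φ` is strongly attenuated when `‖v‖² ≪ C`. -/
theorem vscale_fderiv_opNorm_le
    {d : ℕ} (hd : 1 ≤ d) (C : ℝ) (hC : 0 < C)
    (φ : ℝ → ℝ) (hφ : ∀ r, φ r = r / (r + C))
    (Φ : EuclideanSpace ℝ (Fin d) → EuclideanSpace ℝ (Fin d))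
    (hΦ : ∀ v, Φ v = φ (‖v‖ ^ 2) • v) :
    ∀ v : EuclideanSpace ℝ (Fin d),
      ‖fderiv ℝ Φ v‖ ≤ 3 * ‖v‖ ^ 2 / C := by
  have hφfun : φ = fun s => s / (s + C) := funext hφ
  have hΦfun : Φ = fun w => φ (‖w‖ ^ 2) • w := funext hΦ
  subst hφfun hΦfun
  intro v

  set r : ℝ := ‖v‖ ^ 2 with hr
  have hr0 : 0 ≤ r := by positivity
  have hrC : r + C ≠ 0 := by positivity
  -- derivative of r ↦ r/(r+C) at r
  have hden : HasDerivAt (fun s : ℝ => s + C) 1 r := by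
    simpa using (hasDerivAt_id r).add_const C
  have hφ' : HasDerivAt (fun s : ℝ => s / (s + C)) (C / (r + C) ^ 2) r := by
    have : HasDerivAt (fun s : ℝ => s / (s + C)) ((1 * (r + C) - r * 1) / (r + C) ^ 2) r :=
      (hasDerivAt_id r).div hden hrC
    have h2 : (1 * (r + C) - r * 1) / (r + C) ^ 2 = C / (r + C) ^ 2 := by ring
    exact h2 ▸ this
  have hnsq : HasFDerivAt (fun w : EuclideanSpace ℝ (Fin d) => ‖w‖ ^ 2) (2 • (innerSL ℝ v)) v := by
    simpa using (hasFDerivAt_id v).norm_sq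
  have hg : HasFDerivAt (fun w : EuclideanSpace ℝ (Fin d) => ‖w‖ ^ 2 / (‖w‖ ^ 2 + C))
      ((C / (r + C) ^ 2) • (2 • (innerSL ℝ v))) v := by
    have := hφ'.comp_hasFDerivAt v hnsq; exact this
  set L : EuclideanSpace ℝ (Fin d) →L[ℝ] EuclideanSpace ℝ (Fin d) :=
    (r / (r + C)) • ContinuousLinearMap.id ℝ (EuclideanSpace ℝ (Fin d))
      + ((C / (r + C) ^ 2) • (2 • (innerSL ℝ v))).smulRight v with hL
  have hΦ' : HasFDerivAt (fun w : EuclideanSpace ℝ (Fin d) => (fun s => s / (s + C)) (‖w‖ ^ 2) • w) L v := by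
    have := hg.smul (hasFDerivAt_id (𝕜 := ℝ) v)
    exact this
  rw [hΦ'.fderiv]
  refine ContinuousLinearMap.opNorm_le_bound _ (by positivity) fun w => ?_
  have hLw : L w = (r / (r + C)) • w + ((C / (r + C) ^ 2) * (2 * ⟪v, w⟫)) • v := by
    rw [hL]
    simp only [ContinuousLinearMap.add_apply, ContinuousLinearMap.smul_apply,
      ContinuousLinearMap.id_apply, ContinuousLinearMap.smulRight_apply,
      ContinuousLinearMap.smul_apply, innerSL_apply_apply, smul_eq_mul]
    norm_num
  rw [hLw]
  have h1 : ‖(r / (r + C)) • w‖ ≤ r / C * ‖w‖ := by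
    rw [norm_smul]
    gcongr
    rw [Real.norm_eq_abs, abs_div, abs_of_nonneg hr0, abs_of_pos (by positivity)]
    rw [div_le_div_iff₀ (by positivity) hC]
    nlinarith
  have h2 : ‖((C / (r + C) ^ 2) * (2 * ⟪v, w⟫)) • v‖ ≤ 2 * r / C * ‖w‖ := by
    rw [norm_smul, Real.norm_eq_abs, abs_mul]
    have hinner : |⟪v, w⟫| ≤ ‖v‖ * ‖w‖ := abs_real_inner_le_norm v w
    have hCle : C / (r + C) ^ 2 ≤ 1 / C := by
      rw [div_le_div_iff₀ (by positivity) hC]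
      nlinarith
    have habs : |C / (r + C) ^ 2| = C / (r + C) ^ 2 := abs_of_pos (by positivity)
    calc |C / (r + C) ^ 2| * |2 * ⟪v, w⟫| * ‖v‖
        ≤ (1 / C) * (2 * (‖v‖ * ‖w‖)) * ‖v‖ := by
          rw [habs, abs_mul, abs_two]
          gcongr
      _ = 2 * (‖v‖ * ‖v‖) / C * ‖w‖ := by ring
      _ = 2 * r / C * ‖w‖ := by rw [hr]; ring_nf
  calc ‖(r / (r + C)) • w + ((C / (r + C) ^ 2) * (2 * ⟪v, w⟫)) • v‖
      ≤ ‖(r / (r + C)) • w‖ + ‖((C / (r + C) ^ 2) * (2 * ⟪v, w⟫)) • v‖ := norm_add_le _ _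
    _ ≤ r / C * ‖w‖ + 2 * r / C * ‖w‖ := add_le_add h1 h2
    _ = 3 * r / C * ‖w‖ := by ring
end
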